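/- For each integer n ≥ 0 and parameter α, the higher-order Euler number E_n^{(α)} = 2^n E_n^{(α)}(1/2) satisfies E_n^{(α)} = Σ_{k=0}^{n} C(n,k) · Σ_{i=0}^{k} ⟨−α⟩_i · S(k,i) · 2^{k−i}. -/

import Mathlib

open Finset

/-- Stirling numbers of the second kind `S(n,k)`. -/
def stirling : ℕ → ℕ → ℕ
  | 0, 0 => 1
  | 0, _ + 1 => 0
  | _ + 1, 0 => 0
  | n + 1, k + 1 => (k + 1) * stirling n (k + 1) + stirling n k

/-- The falling factorial `⟨x⟩_i = x (x-1) ⋯ (x-i+1)`, with `⟨x⟩_0 = 1`. -/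
def fallingFac (x : ℝ) (i : ℕ) : ℝ := ∏ k ∈ Finset.range i, (x - k)

/-- The function `(e^t - 1)/t`, extended by the value `1` at `t = 0`. -/
noncomputable def expm1Div (t : ℝ) : ℝ := if t = 0 then 1 else (Real.exp t - 1) / t

/-- The higher-order Bernoulli polynomial `B_n^{(α)}(x)`, defined via the generating
function `(t/(eᵗ-1))^α e^{xt} = ∑ B_n^{(α)}(x) tⁿ/n!`, i.e. as the `n`-th derivative
of `((eᵗ-1)/t)^{-α} e^{xt}` at `t = 0`. -/
noncomputable def higherBernoulli (n : ℕ) (α x : ℝ) : ℝ :=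
  iteratedDeriv n (fun t => expm1Div t ^ (-α) * Real.exp (x * t)) 0

/-- The higher-order Euler polynomial `E_n^{(α)}(x)`, defined via the generating
function `(2/(eᵗ+1))^α e^{xt} = ∑ E_n^{(α)}(x) tⁿ/n!`. -/
noncomputable def higherEuler (n : ℕ) (α x : ℝ) : ℝ :=
  iteratedDeriv n (fun t => ((Real.exp t + 1) / 2) ^ (-α) * Real.exp (x * t)) 0

namespace HEAux

lemma stirling_eq_zero : ∀ k i : ℕ, k < i → stirling k i = 0
  | 0, _ + 1, _ => rfl
  | k + 1, i + 1, h => by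
    have h1 : k < i + 1 := by omega
    have h2 : k < i := by omega
    simp [stirling, stirling_eq_zero k (i+1) h1, stirling_eq_zero k i h2]

lemma fallingFac_succ (x : ℝ) (i : ℕ) :
    fallingFac x (i + 1) = fallingFac x i * (x - i) := Finset.prod_range_succ _ _

noncomputable def Afun (t : ℝ) : ℝ := (Real.exp (2 * t) + 1) / 2
noncomputable def Efun (t : ℝ) : ℝ := Real.exp (2 * t) / 2

lemma A_pos (t : ℝ) : 0 < Afun t := by
  have := Real.exp_pos (2 * t); unfold Afun; linarith

lemma hasDerivAt_E (t : ℝ) : HasDerivAt Efun (2 * Efun t) t := by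
  have h : HasDerivAt (fun t : ℝ => Real.exp (2 * t)) (Real.exp (2 * t) * 2) t :=
    (Real.hasDerivAt_exp (2 * t)).comp t ((hasDerivAt_id t).const_mul 2) |>.congr_deriv (by ring)
  have := h.div_const 2
  exact this.congr_deriv (by unfold Efun; ring)

lemma hasDerivAt_A (t : ℝ) : HasDerivAt Afun (2 * Efun t) t := by
  have h : HasDerivAt (fun t : ℝ => Real.exp (2 * t)) (Real.exp (2 * t) * 2) t :=
    (Real.hasDerivAt_exp (2 * t)).comp t ((hasDerivAt_id t).const_mul 2) |>.congr_deriv (by ring)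
  have := (h.add_const 1).div_const 2
  exact this.congr_deriv (by unfold Efun; ring)

lemma hasDerivAt_T (i : ℕ) (p t : ℝ) :
    HasDerivAt (fun t => Efun t ^ i * Afun t ^ p)
      (2 * ((i : ℝ) * (Efun t ^ i * Afun t ^ p) + p * (Efun t ^ (i + 1) * Afun t ^ (p - 1)))) t := by
  have hE := (hasDerivAt_E t).pow i
  have hA := (hasDerivAt_A t).rpow_const (p := p) (Or.inl (A_pos t).ne')
  have := hE.mul hA
  refine this.congr_deriv ?_
  cases i with
  | zero => simp [pow_succ]; ring
  | succ j => push_cast; simp only [Nat.add_sub_cancel, pow_succ, Pi.pow_apply]; ring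

end HEAux

namespace HEAux

noncomputable def sfun (α : ℝ) (k : ℕ) (t : ℝ) : ℝ :=
  ∑ i ∈ range (k + 1),
    (fallingFac (-α) i * (stirling k i : ℝ) * 2 ^ k) * (Efun t ^ i * Afun t ^ (-α - i))

lemma sfun_hasDerivAt (α : ℝ) (k : ℕ) (t : ℝ) :
    HasDerivAt (sfun α k) (sfun α (k + 1) t) t := by
  have h : HasDerivAt (sfun α k)
      (∑ i ∈ range (k + 1), (fallingFac (-α) i * (stirling k i : ℝ) * 2 ^ k) *
        (2 * ((i : ℝ) * (Efun t ^ i * Afun t ^ (-α - i)) +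
          (-α - i) * (Efun t ^ (i + 1) * Afun t ^ (-α - i - 1))))) t := by
    have := HasDerivAt.fun_sum (fun i (_ : i ∈ range (k + 1)) =>
      (hasDerivAt_T i (-α - i) t).const_mul (fallingFac (-α) i * (stirling k i : ℝ) * 2 ^ k))
    exact this
  convert h using 1
  have hexp : ∀ i : ℕ, Afun t ^ (-α - ((i : ℕ) + 1 : ℕ)) = Afun t ^ (-α - (i : ℝ) - 1) := by
    intro i; congr 1; push_cast; ring
  show (∑ i ∈ range (k + 1 + 1),
    (fallingFac (-α) i * (stirling (k+1) i : ℝ) * 2 ^ (k+1)) * (Efun t ^ i * Afun t ^ (-α - i))) = _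
  rw [Finset.sum_range_succ']
  have h0 : (fallingFac (-α) 0 * (stirling (k + 1) 0 : ℝ) * 2 ^ (k+1)) *
      (Efun t ^ 0 * Afun t ^ (-α - (0:ℕ))) = 0 := by
    norm_num [show stirling (k + 1) 0 = 0 from rfl]
  rw [h0, add_zero]
  have hterm : ∀ i ∈ range (k + 1),
      (fallingFac (-α) (i+1) * (stirling (k+1) (i+1) : ℝ) * 2 ^ (k+1)) *
        (Efun t ^ (i+1) * Afun t ^ (-α - ((i+1:ℕ)))) =
      (fallingFac (-α) (i+1) * (((i:ℝ)+1) * (stirling k (i+1) : ℝ)) * 2 ^ (k+1)) *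
        (Efun t ^ (i+1) * Afun t ^ (-α - (i:ℝ) - 1))
      + (fallingFac (-α) (i+1) * (stirling k i : ℝ) * 2 ^ (k+1)) *
        (Efun t ^ (i+1) * Afun t ^ (-α - (i:ℝ) - 1)) := by
    intro i _
    rw [hexp i, show stirling (k+1) (i+1) = (i + 1) * stirling k (i+1) + stirling k i from rfl]
    push_cast
    ring
  rw [Finset.sum_congr rfl hterm, Finset.sum_add_distrib]
  have hfirst : ∑ i ∈ range (k + 1),
      (fallingFac (-α) (i+1) * (((i:ℝ)+1) * (stirling k (i+1) : ℝ)) * 2 ^ (k+1)) *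
        (Efun t ^ (i+1) * Afun t ^ (-α - (i:ℝ) - 1))
      = ∑ i ∈ range (k + 1),
      (fallingFac (-α) i * ((i:ℝ) * (stirling k i : ℝ)) * 2 ^ (k+1)) *
        (Efun t ^ i * Afun t ^ (-α - (i:ℝ))) := by
    rw [Finset.sum_range_succ, Finset.sum_range_succ'
      (fun i => (fallingFac (-α) i * ((i:ℝ) * (stirling k i : ℝ)) * 2 ^ (k+1)) *
        (Efun t ^ i * Afun t ^ (-α - (i:ℝ)))) k]
    simp [stirling_eq_zero k (k+1) (by omega)]
    exact Finset.sum_congr rfl fun i _ => by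
      rw [show -α - (i:ℝ) - 1 = -α - ((i:ℝ) + 1) by ring]
  rw [hfirst, ← Finset.sum_add_distrib]
  refine Finset.sum_congr rfl fun i _ => ?_
  rw [fallingFac_succ]
  ring

noncomputable def psi (α : ℝ) (t : ℝ) : ℝ := Afun t ^ (-α)

lemma iteratedDeriv_psi (α : ℝ) (k : ℕ) : iteratedDeriv k (psi α) = sfun α k := by
  induction k with
  | zero =>
    funext t
    simp [psi, sfun, fallingFac, stirling]
  | succ k ih =>
    funext t
    rw [iteratedDeriv_succ, ih]
    exact (sfun_hasDerivAt α k t).deriv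

lemma iteratedDeriv_g (α : ℝ) (n : ℕ) :
    iteratedDeriv n (fun t => Afun t ^ (-α) * Real.exp t)
      = fun t => (∑ k ∈ range (n + 1), (n.choose k : ℝ) * sfun α k t) * Real.exp t := by
  induction n with
  | zero =>
    funext t
    simp [sfun, fallingFac, stirling]
  | succ n ih =>
    funext t
    rw [iteratedDeriv_succ, ih]
    have hsum : HasDerivAt (fun t => ∑ k ∈ range (n + 1), (n.choose k : ℝ) * sfun α k t)
        (∑ k ∈ range (n + 1), (n.choose k : ℝ) * sfun α (k + 1) t) t :=
      HasDerivAt.fun_sum fun k _ => (sfun_hasDerivAt α k t).const_mul _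
    have h : HasDerivAt (fun t => (∑ k ∈ range (n + 1), (n.choose k : ℝ) * sfun α k t) * Real.exp t) ((∑ k ∈ range (n + 1), (n.choose k : ℝ) * sfun α (k + 1) t) * Real.exp t + (∑ k ∈ range (n + 1), (n.choose k : ℝ) * sfun α k t) * Real.exp t) t := hsum.mul (Real.hasDerivAt_exp t)
    rw [h.deriv]
    have key : (∑ k ∈ range (n + 1), (n.choose k : ℝ) * sfun α (k + 1) t)
        + (∑ k ∈ range (n + 1), (n.choose k : ℝ) * sfun α k t)
        = ∑ k ∈ range (n + 1 + 1), ((n + 1).choose k : ℝ) * sfun α k t := by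
      rw [Finset.sum_range_succ' (fun k => (((n + 1).choose k : ℕ) : ℝ) * sfun α k t) (n + 1)]
      have hpascal : ∀ k ∈ range (n + 1), (((n + 1).choose (k + 1) : ℕ) : ℝ) * sfun α (k+1) t
          = (n.choose k : ℝ) * sfun α (k+1) t + (n.choose (k + 1) : ℝ) * sfun α (k+1) t := by
        intro k _
        rw [Nat.choose_succ_succ]
        push_cast
        ring
      rw [Finset.sum_congr rfl hpascal, Finset.sum_add_distrib]
      have h2 : ∑ k ∈ range (n + 1), (n.choose k : ℝ) * sfun α k t
          = (∑ k ∈ range (n + 1), (n.choose (k + 1) : ℝ) * sfun α (k + 1) t)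
            + (((n + 1).choose 0 : ℕ) : ℝ) * sfun α 0 t := by
        rw [Finset.sum_range_succ' (fun k => (n.choose k : ℝ) * sfun α k t) n,
          Finset.sum_range_succ]
        simp [Nat.choose_eq_zero_of_lt (by omega : n < n + 1)]
      rw [h2]
      ring
    rw [← key]
    ring

lemma sfun_zero (α : ℝ) (k : ℕ) :
    sfun α k 0 = ∑ i ∈ range (k + 1), fallingFac (-α) i * (stirling k i : ℝ) * 2 ^ (k - i) := by
  unfold sfun
  refine Finset.sum_congr rfl fun i hi => ?_
  have hik : i ≤ k := by simpa [Nat.lt_succ_iff] using hi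
  have hE : Efun 0 = 1 / 2 := by unfold Efun; norm_num
  have hA : Afun 0 = 1 := by unfold Afun; norm_num
  rw [hE, hA, Real.one_rpow]
  have h2 : (2 : ℝ) ^ k = 2 ^ (k - i) * 2 ^ i := by rw [← pow_add, Nat.sub_add_cancel hik]
  rw [h2]
  have h2i : (2 : ℝ) ^ i ≠ 0 := by positivity
  field_simp
  rw [mul_assoc, ← mul_pow]; norm_num

end HEAux


open HEAux in
theorem higherEulerNumber_closed_form (n : ℕ) (α : ℝ) :
    2 ^ n * higherEuler n α (1 / 2) =
      ∑ k ∈ Finset.range (n + 1), (n.choose k : ℝ) *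
        ∑ i ∈ Finset.range (k + 1),
          fallingFac (-α) i * (stirling k i : ℝ) * 2 ^ (k - i) := by
  set f : ℝ → ℝ := fun t => ((Real.exp t + 1) / 2) ^ (-α) * Real.exp (1 / 2 * t) with hf
  have hcd : ContDiff ℝ n f := by
    apply ContDiff.mul
    · apply ContDiff.rpow_const_of_ne
      · exact ((Real.contDiff_exp.of_le le_top).add contDiff_const).div_const 2
      · intro t; positivity
    · exact (Real.contDiff_exp.of_le le_top).comp (contDiff_const.mul contDiff_id)
  have hscale := iteratedDeriv_comp_const_mul hcd 2
  have h1 : higherEuler n α (1 / 2) = iteratedDeriv n f 0 := rfl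
  have h2 : iteratedDeriv n (fun x => f (2 * x)) 0 = 2 ^ n * iteratedDeriv n f 0 := by
    rw [hscale]
    norm_num
  have h3 : (fun x => f (2 * x)) = fun t => Afun t ^ (-α) * Real.exp t := by
    funext t
    simp only [hf, Afun]
    congr 1
    ring
  rw [h1, ← h2, h3, iteratedDeriv_g]
  simp only [Real.exp_zero, mul_one]
  exact Finset.sum_congr rfl fun k _ => by rw [sfun_zero]
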